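/- arXiv:1109.3646 — 2 statements merged into one kernel-verified Lean document; each statement's English description precedes it below -/
import Mathlib

section
/- X is almost K-reduced if and only if its complexification Y = X_ℂ is G-saturated, where G = K_ℂ acts on V = W ⊗_ℝ ℂ. -/
/-!
Common framework: a "compact Lie group / complex reductive group acting on a
finite-dimensional module" is modelled as a subgroup of invertible `n × n`
matrices over `𝕜 = ℝ` or `ℂ` acting on `Fin n → 𝕜` by `Matrix.mulVec`.
Polynomial functions on the module are `MvPolynomial (Fin n) 𝕜`.
-/

set_option synthInstance.maxHeartbeats 1000000
set_option maxHeartbeats 1000000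

noncomputable section

open MvPolynomial

namespace ZPaper

variable (𝕜 : Type) [RCLike 𝕜] (n : ℕ)

/-- The zero set of a family of polynomials. -/
def zeroSet (S : Set (MvPolynomial (Fin n) 𝕜)) : Set (Fin n → 𝕜) :=
  {v | ∀ p ∈ S, eval v p = 0}

/-- A subset of `𝕜ⁿ` is algebraic if it is the zero set of a family of polynomials. -/
def IsAlgebraicSet (X : Set (Fin n → 𝕜)) : Prop :=
  ∃ S : Set (MvPolynomial (Fin n) 𝕜), X = zeroSet 𝕜 n S

/-- The vanishing ideal `I(X)` of a subset `X ⊆ 𝕜ⁿ`. -/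
def vanishingIdeal (X : Set (Fin n → 𝕜)) : Ideal (MvPolynomial (Fin n) 𝕜) where
  carrier := {p | ∀ x ∈ X, eval x p = 0}
  zero_mem' := by intro x _; simp
  add_mem' := by intro a b ha hb x hx; simp [ha x hx, hb x hx]
  smul_mem' := by intro c p hp x hx; simp [smul_eq_mul, hp x hx]

/-- The Zariski closure of a subset of `𝕜ⁿ`. -/
def zclosure (A : Set (Fin n → 𝕜)) : Set (Fin n → 𝕜) :=
  zeroSet 𝕜 n (vanishingIdeal 𝕜 n A : Set (MvPolynomial (Fin n) 𝕜))

/-- `A` is Zariski dense in `X`: every polynomial vanishing on `A` vanishes on `X`. -/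
def ZDenseIn (A X : Set (Fin n → 𝕜)) : Prop :=
  ∀ p : MvPolynomial (Fin n) 𝕜, (∀ a ∈ A, eval a p = 0) → ∀ x ∈ X, eval x p = 0

/-- A set of matrices is a subgroup of `GL_n(𝕜)`. -/
def IsMatSubgroup (G : Set (Matrix (Fin n) (Fin n) 𝕜)) : Prop :=
  (1 : Matrix (Fin n) (Fin n) 𝕜) ∈ G ∧ (∀ a ∈ G, ∀ b ∈ G, a * b ∈ G) ∧
    ∀ a ∈ G, IsUnit a ∧ a⁻¹ ∈ G

/-- `X` is a `G`-stable subset of `𝕜ⁿ`. -/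
def Stabilizes (G : Set (Matrix (Fin n) (Fin n) 𝕜)) (X : Set (Fin n → 𝕜)) : Prop :=
  ∀ g ∈ G, ∀ x ∈ X, Matrix.mulVec g x ∈ X

/-- A polynomial is `G`-invariant. -/
def Invariant (G : Set (Matrix (Fin n) (Fin n) 𝕜)) (p : MvPolynomial (Fin n) 𝕜) : Prop :=
  ∀ g ∈ G, ∀ v : Fin n → 𝕜, eval (Matrix.mulVec g v) p = eval v p

/-- `I_G(X)`: the ideal generated by the `G`-invariant polynomials vanishing on `X`,
i.e. by `I(X)^G = I(X) ∩ 𝕜[V]^G`. -/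
def invariantIdeal (G : Set (Matrix (Fin n) (Fin n) 𝕜)) (X : Set (Fin n → 𝕜)) :
    Ideal (MvPolynomial (Fin n) 𝕜) :=
  Ideal.span {p | Invariant 𝕜 n G p ∧ ∀ x ∈ X, eval x p = 0}

/-- `X` is `G`-reduced: `I_G(X) = I(X)`. -/
def IsGReduced (G : Set (Matrix (Fin n) (Fin n) 𝕜)) (X : Set (Fin n → 𝕜)) : Prop :=
  invariantIdeal 𝕜 n G X = vanishingIdeal 𝕜 n X

/-- `X` is almost `G`-reduced: `√I_G(X) = I(X)`. -/
def IsAlmostGReduced (G : Set (Matrix (Fin n) (Fin n) 𝕜)) (X : Set (Fin n → 𝕜)) : Prop :=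
  (invariantIdeal 𝕜 n G X).radical = vanishingIdeal 𝕜 n X

/-- The orbit `G·v`. -/
def orbit (G : Set (Matrix (Fin n) (Fin n) 𝕜)) (v : Fin n → 𝕜) : Set (Fin n → 𝕜) :=
  (fun g => Matrix.mulVec g v) '' G

/-- The isotropy group `G_v`. -/
def isotropy (G : Set (Matrix (Fin n) (Fin n) 𝕜)) (v : Fin n → 𝕜) :
    Set (Matrix (Fin n) (Fin n) 𝕜) :=
  {g ∈ G | Matrix.mulVec g v = v}

/-- Matrix exponential. -/
def mexp (A : Matrix (Fin n) (Fin n) 𝕜) : Matrix (Fin n) (Fin n) 𝕜 :=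
  ∑' k : ℕ, ((k.factorial : 𝕜)⁻¹) • A ^ k

/-- The Lie algebra of a matrix group: matrices whose one-parameter subgroup lies in `G`. -/
def lieAlgebra (G : Set (Matrix (Fin n) (Fin n) 𝕜)) : Set (Matrix (Fin n) (Fin n) 𝕜) :=
  {A | ∀ t : 𝕜, mexp 𝕜 n (t • A) ∈ G}

/-- The tangent space `T_v(G·v)` to the orbit, i.e. `𝔤·v`. -/
def orbitTangent (G : Set (Matrix (Fin n) (Fin n) 𝕜)) (v : Fin n → 𝕜) :
    Submodule 𝕜 (Fin n → 𝕜) :=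
  Submodule.span 𝕜 ((fun A => Matrix.mulVec A v) '' lieAlgebra 𝕜 n G)

/-- `N` is a `G_v`-stable complement to `T_v(G·v)` in `𝕜ⁿ` (a slice at `v`). -/
def IsSliceComplement (G : Set (Matrix (Fin n) (Fin n) 𝕜)) (v : Fin n → 𝕜)
    (N : Submodule 𝕜 (Fin n → 𝕜)) : Prop :=
  IsCompl (orbitTangent 𝕜 n G v) N ∧
    ∀ g ∈ isotropy 𝕜 n G v, ∀ x ∈ N, Matrix.mulVec g x ∈ N

/-- The image of `H` in `GL(N)` is trivial. -/
def ActsTriviallyOn (H : Set (Matrix (Fin n) (Fin n) 𝕜))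
    (N : Submodule 𝕜 (Fin n → 𝕜)) : Prop :=
  ∀ g ∈ H, ∀ x ∈ N, Matrix.mulVec g x = x

/-- The image of `H` in `GL(N)` is finite. -/
def HasFiniteImageOn (H : Set (Matrix (Fin n) (Fin n) 𝕜))
    (N : Submodule 𝕜 (Fin n → 𝕜)) : Prop :=
  Set.Finite ((fun g => fun x : N => Matrix.mulVec g (x : Fin n → 𝕜)) '' H)

/-- The orbit `G·v` is (Zariski) closed. -/
def HasClosedOrbit (G : Set (Matrix (Fin n) (Fin n) 𝕜)) (v : Fin n → 𝕜) : Prop :=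
  zclosure 𝕜 n (orbit 𝕜 n G v) ⊆ orbit 𝕜 n G v

/-- `v` lies on a principal orbit: `G·v` is closed and the isotropy group acts trivially on
some (hence any) slice at `v`. -/
def IsPrincipalPt (G : Set (Matrix (Fin n) (Fin n) 𝕜)) (v : Fin n → 𝕜) : Prop :=
  HasClosedOrbit 𝕜 n G v ∧
    ∃ N, IsSliceComplement 𝕜 n G v N ∧ ActsTriviallyOn 𝕜 n (isotropy 𝕜 n G v) N

/-- `v` lies on an almost principal orbit. -/
def IsAlmostPrincipalPt (G : Set (Matrix (Fin n) (Fin n) 𝕜)) (v : Fin n → 𝕜) : Prop :=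
  HasClosedOrbit 𝕜 n G v ∧
    ∃ N, IsSliceComplement 𝕜 n G v N ∧ HasFiniteImageOn 𝕜 n (isotropy 𝕜 n G v) N

/-- The set of principal points `V_pr`. -/
def prPoints (G : Set (Matrix (Fin n) (Fin n) 𝕜)) : Set (Fin n → 𝕜) :=
  {v | IsPrincipalPt 𝕜 n G v}

/-- The set of almost principal points `V_apr`. -/
def aprPoints (G : Set (Matrix (Fin n) (Fin n) 𝕜)) : Set (Fin n → 𝕜) :=
  {v | IsAlmostPrincipalPt 𝕜 n G v}

/-- `π⁻¹(π(Y))`: all points that the invariants cannot separate from `Y`. -/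
def saturation (G : Set (Matrix (Fin n) (Fin n) 𝕜)) (Y : Set (Fin n → 𝕜)) :
    Set (Fin n → 𝕜) :=
  {v | ∃ y ∈ Y, ∀ p, Invariant 𝕜 n G p → eval v p = eval y p}

/-- `Y` is `G`-saturated: `Y = π⁻¹(π(Y))`. -/
def IsSaturated (G : Set (Matrix (Fin n) (Fin n) 𝕜)) (Y : Set (Fin n → 𝕜)) : Prop :=
  Y = saturation 𝕜 n G Y

/-- The fiber `π⁻¹(π(v))` of the quotient morphism. -/
def piFiber (G : Set (Matrix (Fin n) (Fin n) 𝕜)) (v : Fin n → 𝕜) : Set (Fin n → 𝕜) :=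
  {u | ∀ p, Invariant 𝕜 n G p → eval u p = eval v p}

/-- The invariant ring `𝕜[V]^G` as a subalgebra of `𝕜[V]`. -/
def invariantSubalgebra (G : Set (Matrix (Fin n) (Fin n) 𝕜)) :
    Subalgebra 𝕜 (MvPolynomial (Fin n) 𝕜) where
  carrier := {p | Invariant 𝕜 n G p}
  mul_mem' := by intro a b ha hb g hg v; simp [ha g hg v, hb g hg v]
  one_mem' := by intro g hg v; simp
  add_mem' := by intro a b ha hb g hg v; simp [ha g hg v, hb g hg v]
  zero_mem' := by intro g hg v; simp
  algebraMap_mem' := by intro r g hg v; simp [MvPolynomial.algebraMap_eq]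

/-- The representation is cofree: `𝕜[V]` is a free module over `𝕜[V]^G`. -/
def IsCofree (G : Set (Matrix (Fin n) (Fin n) 𝕜)) : Prop :=
  Module.Free ↥(invariantSubalgebra 𝕜 n G) (MvPolynomial (Fin n) 𝕜)

/-- The vanishing ideal of `π(Y)` in `𝕜[V//G] = 𝕜[V]^G`. -/
def quotVanishingIdeal (G : Set (Matrix (Fin n) (Fin n) 𝕜)) (Y : Set (Fin n → 𝕜)) :
    Ideal ↥(invariantSubalgebra 𝕜 n G) where
  carrier := {p | ∀ y ∈ Y, eval y (p : MvPolynomial (Fin n) 𝕜) = 0}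
  zero_mem' := by intro y hy; simp
  add_mem' := by intro a b ha hb y hy; simp [ha y hy, hb y hy]
  smul_mem' := by intro c p hp y hy; simp [smul_eq_mul, hp y hy]

/-- The module is stable: there is a nonempty Zariski-open set of points with closed orbit. -/
def IsStableModule (G : Set (Matrix (Fin n) (Fin n) 𝕜)) : Prop :=
  ∃ U : Set (Fin n → 𝕜), U.Nonempty ∧ IsAlgebraicSet 𝕜 n Uᶜ ∧
    ∀ v ∈ U, HasClosedOrbit 𝕜 n G v

/-- `G` is Zariski closed in `GL_n(𝕜)`. -/
def IsZClosedInGL (G : Set (Matrix (Fin n) (Fin n) 𝕜)) : Prop :=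
  ∃ P : Set (MvPolynomial (Fin n × Fin n) 𝕜),
    G = {g | IsUnit g ∧ ∀ p ∈ P, eval (fun ij => g ij.1 ij.2) p = 0}

/-- `G` is a (linearly) reductive algebraic group: a Zariski closed subgroup of `GL_n`
containing a Zariski-dense compact subgroup (the unitarian trick characterization). -/
def IsReductiveGroup (G : Set (Matrix (Fin n) (Fin n) 𝕜)) : Prop :=
  IsMatSubgroup 𝕜 n G ∧ IsZClosedInGL 𝕜 n G ∧
    ∃ K : Set (Matrix (Fin n) (Fin n) 𝕜), K ⊆ G ∧ IsCompact K ∧ IsMatSubgroup 𝕜 n K ∧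
      ∀ p : MvPolynomial (Fin n × Fin n) 𝕜,
        (∀ k ∈ K, eval (fun ij => k ij.1 ij.2) p = 0) →
          ∀ g ∈ G, eval (fun ij => g ij.1 ij.2) p = 0

/-- The isotropy groups of `v` and `w` are conjugate in `G`. -/
def ConjIsotropy (G : Set (Matrix (Fin n) (Fin n) 𝕜)) (v w : Fin n → 𝕜) : Prop :=
  ∃ g ∈ G, isotropy 𝕜 n G w = (fun h => g * h * g⁻¹) '' isotropy 𝕜 n G v

/-- The (Luna) stratum of `V` determined by a point `v` with closed orbit: the inverse image
under `π` of the set of closed orbits with isotropy group conjugate to `G_v`. -/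
def stratumOf (G : Set (Matrix (Fin n) (Fin n) 𝕜)) (v : Fin n → 𝕜) : Set (Fin n → 𝕜) :=
  {u | ∃ w, HasClosedOrbit 𝕜 n G w ∧ w ∈ zclosure 𝕜 n (orbit 𝕜 n G u) ∧
    ConjIsotropy 𝕜 n G v w}

/-- Dimension of (the Zariski closure of) a subset of `𝕜ⁿ`, as the Krull dimension of its
coordinate ring. -/
def adim (X : Set (Fin n → 𝕜)) : WithBot ℕ∞ :=
  ringKrullDim (MvPolynomial (Fin n) 𝕜 ⧸ vanishingIdeal 𝕜 n X)

/-- A nonempty algebraic set with prime vanishing ideal, i.e. an irreducible algebraic set. -/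
def IsIrredAlg (Z : Set (Fin n → 𝕜)) : Prop :=
  IsAlgebraicSet 𝕜 n Z ∧ Z.Nonempty ∧ (vanishingIdeal 𝕜 n Z).IsPrime

/-- `Z` is an irreducible component of `Y`. -/
def IsIrredComponentOf (Y Z : Set (Fin n → 𝕜)) : Prop :=
  IsIrredAlg 𝕜 n Z ∧ Z ⊆ Y ∧
    ∀ Z', IsIrredAlg 𝕜 n Z' → Z ⊆ Z' → Z' ⊆ Y → Z' = Z

/-- The rank at `v` of the differential of `f = (f_1, …, f_d) : V → 𝕜^d`. -/
def jacRank {d : ℕ} (f : Fin d → MvPolynomial (Fin n) 𝕜) (v : Fin n → 𝕜) : ℕ :=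
  (Matrix.of fun (i : Fin d) (j : Fin n) => eval v (pderiv j (f i))).rank

/-- A polynomial is `H`-invariant as a function on the submodule `N`. -/
def InvariantOn (H : Set (Matrix (Fin n) (Fin n) 𝕜)) (N : Submodule 𝕜 (Fin n → 𝕜))
    (p : MvPolynomial (Fin n) 𝕜) : Prop :=
  ∀ g ∈ H, ∀ x ∈ N, eval (Matrix.mulVec g x) p = eval x p

/-- The null cone of the `H`-module `N`: points of `N` which the `H`-invariant functions on `N`
cannot separate from `0`. -/
def sliceNullCone (H : Set (Matrix (Fin n) (Fin n) 𝕜)) (N : Submodule 𝕜 (Fin n → 𝕜)) :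
    Set (Fin n → 𝕜) :=
  {x | x ∈ N ∧ ∀ p, InvariantOn 𝕜 n H N p → eval x p = eval (0 : Fin n → 𝕜) p}

/-- The `H`-module `N` is coreduced: the vanishing ideal of its null cone in `𝕜[N]` is
generated by `H`-invariant functions.  (Stated in `𝕜[V]`: the vanishing ideal of the null
cone equals the ideal generated by the invariant functions vanishing on it together with the
vanishing ideal of `N`.) -/
def CoreducedOn (H : Set (Matrix (Fin n) (Fin n) 𝕜)) (N : Submodule 𝕜 (Fin n → 𝕜)) : Prop :=
  vanishingIdeal 𝕜 n (sliceNullCone 𝕜 n H N) =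
    Ideal.span ({p | InvariantOn 𝕜 n H N p ∧ ∀ x ∈ sliceNullCone 𝕜 n H N, eval x p = 0} ∪
      {p | ∀ x ∈ (N : Set (Fin n → 𝕜)), eval x p = 0})

/-- Complexification of a real vector. -/
def cVec (w : Fin n → ℝ) : Fin n → ℂ := fun i => (w i : ℂ)

/-- The complexification `G = K_ℂ` of a compact matrix group `K ⊆ GL_n(ℝ)`: the Zariski
closure of `K` in the complex matrices. -/
def complexifiedGroup (K : Set (Matrix (Fin n) (Fin n) ℝ)) :
    Set (Matrix (Fin n) (Fin n) ℂ) :=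
  {g | ∀ p : MvPolynomial (Fin n × Fin n) ℂ,
    (∀ k ∈ K, eval (fun ij => (k ij.1 ij.2 : ℂ)) p = 0) →
      eval (fun ij => g ij.1 ij.2) p = 0}

/-- The complexification `Y = X_ℂ ⊆ ℂⁿ` of `X ⊆ ℝⁿ`: the Zariski closure of `X` in `ℂⁿ`. -/
def complexification (X : Set (Fin n → ℝ)) : Set (Fin n → ℂ) :=
  zclosure ℂ n (cVec n '' X)

section Aux

variable {n : ℕ}

/-- Complexification of a real matrix. -/
def cMat (g : Matrix (Fin n) (Fin n) ℝ) : Matrix (Fin n) (Fin n) ℂ :=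
  fun i j => (g i j : ℂ)

lemma cMat_mulVec (g : Matrix (Fin n) (Fin n) ℝ) (x : Fin n → ℝ) :
    Matrix.mulVec (cMat g) ((cVec n) x) = (cVec n) (Matrix.mulVec g x) := by
  funext i
  simp only [Matrix.mulVec, dotProduct, cMat, cVec]
  push_cast
  rfl

lemma cMat_mul (a b : Matrix (Fin n) (Fin n) ℝ) : cMat (a * b) = cMat a * cMat b := by
  funext i j
  simp only [cMat, Matrix.mul_apply]
  push_cast
  rfl

lemma eval_cV_map (x : Fin n → ℝ) (p : MvPolynomial (Fin n) ℝ) :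
    eval ((cVec n) x) (map (algebraMap ℝ ℂ) p) = ((eval x p : ℝ) : ℂ) := by
  rw [eval_map]
  have := eval₂_comp_left (Complex.ofRealHom : ℝ →+* ℂ) (RingHom.id ℝ) x p
  rw [eval₂_id] at this
  rw [show (algebraMap ℝ ℂ) = Complex.ofRealHom.comp (RingHom.id ℝ) by rfl]
  exact this.symm

/-! ### Real and imaginary parts of a complex polynomial -/

def reP (q : MvPolynomial (Fin n) ℂ) : MvPolynomial (Fin n) ℝ :=
  ∑ m ∈ q.support, monomial m (q.coeff m).re

def imP (q : MvPolynomial (Fin n) ℂ) : MvPolynomial (Fin n) ℝ :=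
  ∑ m ∈ q.support, monomial m (q.coeff m).im

private lemma coeff_sum_mono (f : ℂ → ℝ) (hf : f 0 = 0) (q : MvPolynomial (Fin n) ℂ) (m) :
    coeff m (∑ m' ∈ q.support, monomial m' (f (q.coeff m'))) = f (q.coeff m) := by
  classical
  rw [coeff_sum]
  simp only [coeff_monomial]
  by_cases h : m ∈ q.support
  · rw [Finset.sum_eq_single m]
    · simp
    · intro b _ hb; simp [hb]
    · intro h'; exact absurd h h'
  · rw [Finset.sum_eq_zero]
    · rw [notMem_support_iff.mp h, hf]
    · intro b hb
      have : ¬ b = m := fun e => h (e ▸ hb)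
      simp [this]

lemma coeff_reP (q : MvPolynomial (Fin n) ℂ) (m) : (reP q).coeff m = (q.coeff m).re :=
  coeff_sum_mono _ (by simp) q m

lemma coeff_imP (q : MvPolynomial (Fin n) ℂ) (m) : (imP q).coeff m = (q.coeff m).im :=
  coeff_sum_mono _ (by simp) q m

lemma reP_imP_decomp (q : MvPolynomial (Fin n) ℂ) :
    q = map (algebraMap ℝ ℂ) (reP q) + C Complex.I * map (algebraMap ℝ ℂ) (imP q) := by
  apply MvPolynomial.ext
  intro m
  rw [coeff_add, coeff_C_mul, coeff_map, coeff_map, coeff_reP, coeff_imP]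
  simp only [Complex.coe_algebraMap]
  rw [mul_comm]
  exact (Complex.re_add_im _).symm

lemma eval_cV (q : MvPolynomial (Fin n) ℂ) (x : Fin n → ℝ) :
    eval ((cVec n) x) q
      = Complex.ofReal (eval x (reP q)) + Complex.I * Complex.ofReal (eval x (imP q)) := by
  conv_lhs => rw [reP_imP_decomp q]
  rw [map_add, map_mul, eval_C, eval_cV_map, eval_cV_map]

lemma eval_reP (q : MvPolynomial (Fin n) ℂ) (x : Fin n → ℝ) :
    eval x (reP q) = (eval ((cVec n) x) q).re := by
  rw [eval_cV]; simp

lemma eval_imP (q : MvPolynomial (Fin n) ℂ) (x : Fin n → ℝ) :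
    eval x (imP q) = (eval ((cVec n) x) q).im := by
  rw [eval_cV]; simp

lemma vanish_real_eq_zero (q : MvPolynomial (Fin n) ℂ)
    (h : ∀ x : Fin n → ℝ, eval ((cVec n) x) q = 0) : q = 0 := by
  have h1 : reP q = 0 := by
    apply MvPolynomial.funext; intro x; rw [eval_reP, h x]; simp
  have h2 : imP q = 0 := by
    apply MvPolynomial.funext; intro x; rw [eval_imP, h x]; simp
  rw [reP_imP_decomp q, h1, h2]
  simp

lemma reP_map_mul (f : MvPolynomial (Fin n) ℝ) (q : MvPolynomial (Fin n) ℂ) :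
    reP (map (algebraMap ℝ ℂ) f * q) = f * reP q := by
  classical
  apply MvPolynomial.ext
  intro m
  rw [coeff_reP, coeff_mul, coeff_mul, Complex.re_sum]
  apply Finset.sum_congr rfl
  intro p _
  rw [coeff_map, coeff_reP]
  simp [Complex.coe_algebraMap]

lemma reP_map (f : MvPolynomial (Fin n) ℝ) : reP (map (algebraMap ℝ ℂ) f) = f := by
  apply MvPolynomial.ext
  intro m
  rw [coeff_reP, coeff_map]
  simp [Complex.coe_algebraMap]

/-! ### Substitution of linear forms -/

def matSubst (A : Matrix (Fin n) (Fin n) ℂ) (f : MvPolynomial (Fin n) ℂ) :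
    MvPolynomial (Fin n) ℂ :=
  eval₂ C (fun i => ∑ j, C (A i j) * X j) f

lemma eval_matSubst (A : Matrix (Fin n) (Fin n) ℂ) (f : MvPolynomial (Fin n) ℂ)
    (v : Fin n → ℂ) : eval v (matSubst A f) = eval (A.mulVec v) f := by
  unfold matSubst
  rw [eval₂_comp_left (eval v) (C : ℂ →+* MvPolynomial (Fin n) ℂ)
    (fun i => ∑ j, C (A i j) * X j) f]
  have h1 : (eval v).comp (C : ℂ →+* MvPolynomial (Fin n) ℂ) = RingHom.id ℂ := by
    ext c; simp
  have h2 : ((eval v) ∘ fun i => ∑ j, C (A i j) * X j) = A.mulVec v := by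
    funext i
    simp [Matrix.mulVec, dotProduct]
  rw [h1, h2, eval₂_id]

def entrySubst (v : Fin n → ℂ) (f : MvPolynomial (Fin n) ℂ) :
    MvPolynomial (Fin n × Fin n) ℂ :=
  eval₂ C (fun i => ∑ j, X (i, j) * C (v j)) f

lemma eval_entrySubst (v : Fin n → ℂ) (f : MvPolynomial (Fin n) ℂ)
    (g : Matrix (Fin n) (Fin n) ℂ) :
    eval (fun ij : Fin n × Fin n => g ij.1 ij.2) (entrySubst v f) = eval (g.mulVec v) f := by
  unfold entrySubst
  set ev := (eval (fun ij : Fin n × Fin n => g ij.1 ij.2) :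
    MvPolynomial (Fin n × Fin n) ℂ →+* ℂ)
  rw [eval₂_comp_left ev (C : ℂ →+* MvPolynomial (Fin n × Fin n) ℂ)
    (fun i => ∑ j, X (i, j) * C (v j)) f]
  have h1 : ev.comp (C : ℂ →+* MvPolynomial (Fin n × Fin n) ℂ) = RingHom.id ℂ := by
    ext c; simp [ev]
  have h2 : (ev ∘ fun i => ∑ j, X (i, j) * C (v j)) = g.mulVec v := by
    funext i
    simp [ev, Matrix.mulVec, dotProduct]
  rw [h1, h2, eval₂_id]

variable (n) in
lemma cMat_mem_complexifiedGroup {K : Set (Matrix (Fin n) (Fin n) ℝ)} {k : Matrix (Fin n) (Fin n) ℝ}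
    (hk : k ∈ K) : cMat k ∈ complexifiedGroup n K := by
  intro p hp
  exact hp k hk

variable (n) in
lemma invariant_of_K_invariant {K : Set (Matrix (Fin n) (Fin n) ℝ)}
    (f : MvPolynomial (Fin n) ℂ)
    (hf : ∀ k ∈ K, ∀ v : Fin n → ℂ, eval (Matrix.mulVec (cMat k) v) f = eval v f) :
    Invariant ℂ n (complexifiedGroup n K) f := by
  intro g hg v
  have hv : ∀ k ∈ K, eval (fun ij : Fin n × Fin n => ((k ij.1 ij.2 : ℝ) : ℂ))
      (entrySubst v f - C (eval v f)) = 0 := by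
    intro k hk
    have : eval (fun ij : Fin n × Fin n => (cMat k) ij.1 ij.2)
        (entrySubst v f - C (eval v f)) = 0 := by
      rw [map_sub, eval_entrySubst, eval_C, hf k hk v, sub_self]
    exact this
  have := hg _ hv
  rw [map_sub, eval_entrySubst, eval_C, sub_eq_zero] at this
  exact this

variable (n) in
lemma map_invariant_K {K : Set (Matrix (Fin n) (Fin n) ℝ)} {f : MvPolynomial (Fin n) ℝ}
    (hf : Invariant ℝ n K f) :
    ∀ k ∈ K, ∀ v : Fin n → ℂ,
      eval (Matrix.mulVec (cMat k) v) (map (algebraMap ℝ ℂ) f)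
        = eval v (map (algebraMap ℝ ℂ) f) := by
  intro k hk v
  have hzero : matSubst (cMat k) (map (algebraMap ℝ ℂ) f) - map (algebraMap ℝ ℂ) f = 0 := by
    apply vanish_real_eq_zero
    intro x
    rw [map_sub, eval_matSubst, cMat_mulVec, eval_cV_map, eval_cV_map, hf k hk x, sub_self]
  have := congrArg (eval v) hzero
  rw [map_sub, eval_matSubst, map_zero, sub_eq_zero] at this
  exact this

variable (n) in
lemma map_invariant_complexified {K : Set (Matrix (Fin n) (Fin n) ℝ)}
    {f : MvPolynomial (Fin n) ℝ} (hf : Invariant ℝ n K f) :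
    Invariant ℂ n (complexifiedGroup n K) (map (algebraMap ℝ ℂ) f) :=
  invariant_of_K_invariant n _ (map_invariant_K n hf)

variable (n) in
lemma reP_invariant {K : Set (Matrix (Fin n) (Fin n) ℝ)} {q : MvPolynomial (Fin n) ℂ}
    (hq : ∀ k ∈ K, ∀ v : Fin n → ℂ, eval (Matrix.mulVec (cMat k) v) q = eval v q) :
    Invariant ℝ n K (reP q) ∧ Invariant ℝ n K (imP q) := by
  constructor
  · intro k hk x
    rw [eval_reP, eval_reP, ← cMat_mulVec, hq k hk ((cVec n) x)]
  · intro k hk x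
    rw [eval_imP, eval_imP, ← cMat_mulVec, hq k hk ((cVec n) x)]

lemma reP_finset_sum {α : Type} (s : Finset α) (F : α → MvPolynomial (Fin n) ℂ) :
    reP (∑ i ∈ s, F i) = ∑ i ∈ s, reP (F i) := by
  apply MvPolynomial.ext
  intro m
  rw [coeff_reP, coeff_sum, coeff_sum, Complex.re_sum]
  exact Finset.sum_congr rfl fun i _ => (coeff_reP _ _).symm

lemma mem_span_of_map_mem {S₀ : Set (MvPolynomial (Fin n) ℝ)} {p : MvPolynomial (Fin n) ℝ}
    (h : map (algebraMap ℝ ℂ) p ∈ Ideal.span ((map (algebraMap ℝ ℂ)) '' S₀)) :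
    p ∈ Ideal.span S₀ := by
  obtain ⟨c, hsupp, hsum⟩ := Submodule.mem_span_set.mp h
  have hp : p = ∑ g ∈ c.support, reP (c g * g) := by
    have : p = reP (map (algebraMap ℝ ℂ) p) := (reP_map p).symm
    rw [this, ← hsum, Finsupp.sum, reP_finset_sum]
    apply Finset.sum_congr rfl
    intro g _
    rw [smul_eq_mul]
  rw [hp]
  apply Ideal.sum_mem
  intro g hg
  obtain ⟨f, hfS, hfg⟩ := hsupp hg
  rw [← hfg, mul_comm, reP_map_mul]
  exact Ideal.mul_mem_right _ _ (Ideal.subset_span hfS)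

open MeasureTheory in
variable (n) in
/-- Averaging over the compact group `K` (Reynolds-type operator applied to one polynomial). -/
lemma reynolds {K : Set (Matrix (Fin n) (Fin n) ℝ)} (hKgrp : IsMatSubgroup ℝ n K)
    (hKcpt : IsCompact K) (h : MvPolynomial (Fin n) ℂ) :
    ∃ R : MvPolynomial (Fin n) ℂ,
      (∀ k ∈ K, ∀ v : Fin n → ℂ, eval (Matrix.mulVec (cMat k) v) R = eval v R) ∧
      (∀ v : Fin n → ℂ, (∀ k ∈ K, eval (Matrix.mulVec (cMat k) v) h = 0) → eval v R = 0) ∧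
      (∀ v : Fin n → ℂ, (∀ k ∈ K, eval (Matrix.mulVec (cMat k) v) h = 1) → eval v R = 1) := by
  classical
  -- the group as a subtype
  set T := {g : Matrix (Fin n) (Fin n) ℝ // g ∈ K} with hT
  letI : One T := ⟨⟨1, hKgrp.1⟩⟩
  letI : Mul T := ⟨fun a b => ⟨(a : Matrix (Fin n) (Fin n) ℝ) * b, hKgrp.2.1 _ a.2 _ b.2⟩⟩
  letI : Inv T := ⟨fun a => ⟨(a : Matrix (Fin n) (Fin n) ℝ)⁻¹, (hKgrp.2.2 _ a.2).2⟩⟩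
  letI : Group T :=
    { mul_assoc := fun a b c => Subtype.ext (mul_assoc _ _ _)
      one_mul := fun a => Subtype.ext (one_mul _)
      mul_one := fun a => Subtype.ext (mul_one _)
      inv_mul_cancel := fun a => Subtype.ext
        (Matrix.nonsing_inv_mul _ ((Matrix.isUnit_iff_isUnit_det _).mp (hKgrp.2.2 _ a.2).1)) }
  haveI : CompactSpace T := isCompact_iff_compactSpace.mp hKcpt
  haveI : IsTopologicalGroup T :=
    { continuous_mul := by
        apply Continuous.subtype_mk
        exact ((continuous_subtype_val.comp continuous_fst).matrix_mul
          (continuous_subtype_val.comp continuous_snd))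
      continuous_inv := by
        apply Continuous.subtype_mk
        have heq : (fun a : T => (a : Matrix (Fin n) (Fin n) ℝ)⁻¹)
            = fun a : T => ((a : Matrix (Fin n) (Fin n) ℝ).det)⁻¹ •
                (a : Matrix (Fin n) (Fin n) ℝ).adjugate := by
          funext a
          rw [Matrix.inv_def, Ring.inverse_eq_inv']
        rw [heq]
        exact (continuous_subtype_val.matrix_det.inv₀
            (fun a => ((Matrix.isUnit_iff_isUnit_det _).mp (hKgrp.2.2 _ a.2).1).ne_zero)).smul
          continuous_subtype_val.matrix_adjugate }
  letI : MeasurableSpace T := borel T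
  haveI : BorelSpace T := ⟨rfl⟩
  haveI : Nonempty T := ⟨⟨1, hKgrp.1⟩⟩
  set μ : Measure T := Measure.haarMeasure ⊤ with hμ
  haveI : IsProbabilityMeasure μ := by
    constructor
    have := Measure.haarMeasure_self (K₀ := (⊤ : TopologicalSpace.PositiveCompacts T))
    rwa [TopologicalSpace.PositiveCompacts.coe_top] at this
  haveI : IsFiniteMeasureOnCompacts μ :=
    ⟨fun s _ => lt_of_le_of_lt (measure_mono (Set.subset_univ s))
      (by rw [measure_univ]; exact ENNReal.one_lt_top)⟩
  -- generic substitution polynomial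
  set Q : MvPolynomial (Fin n) (MvPolynomial (Fin n × Fin n) ℂ) :=
    eval₂ ((C : MvPolynomial (Fin n × Fin n) ℂ →+*
        MvPolynomial (Fin n) (MvPolynomial (Fin n × Fin n) ℂ)).comp
      (C : ℂ →+* MvPolynomial (Fin n × Fin n) ℂ))
      (fun i => ∑ j, C (X (i, j)) * X j) h with hQ
  set φ : Matrix (Fin n) (Fin n) ℝ → MvPolynomial (Fin n × Fin n) ℂ →+* ℂ :=
    fun A => eval (fun ij : Fin n × Fin n => ((A ij.1 ij.2 : ℝ) : ℂ)) with hφ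
  have key : ∀ (A : Matrix (Fin n) (Fin n) ℝ) (v : Fin n → ℂ),
      eval₂ (φ A) v Q = eval (Matrix.mulVec (cMat A) v) h := by
    intro A v
    have hk := eval₂_comp_left (eval₂Hom (φ A) v)
      (((C : MvPolynomial (Fin n × Fin n) ℂ →+*
          MvPolynomial (Fin n) (MvPolynomial (Fin n × Fin n) ℂ)).comp
        (C : ℂ →+* MvPolynomial (Fin n × Fin n) ℂ)))
      (fun i => ∑ j, C (X (i, j)) * X j) h
    have h1 : (eval₂Hom (φ A) v).comp
        ((C : MvPolynomial (Fin n × Fin n) ℂ →+*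
          MvPolynomial (Fin n) (MvPolynomial (Fin n × Fin n) ℂ)).comp
        (C : ℂ →+* MvPolynomial (Fin n × Fin n) ℂ)) = RingHom.id ℂ := by
      apply RingHom.ext
      intro c
      simp [φ]
    have h2 : ((eval₂Hom (φ A) v) ∘ fun i => ∑ j, C (X (i, j)) * X j)
        = Matrix.mulVec (cMat A) v := by
      funext i
      simp [Matrix.mulVec, dotProduct, cMat, φ]
    rw [h1, h2] at hk
    rw [eval₂_id] at hk
    exact hk.symm ▸ hk
  set F : (Fin n →₀ ℕ) → T → ℂ :=
    fun m t => φ ((t⁻¹ : T) : Matrix (Fin n) (Fin n) ℝ) (coeff m Q) with hF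
  have hFcont : ∀ m, Continuous (F m) := by
    intro m
    have h1 : Continuous fun t : T => ((t⁻¹ : T) : Matrix (Fin n) (Fin n) ℝ) :=
      continuous_subtype_val.comp continuous_inv
    have h2 : Continuous fun t : T => (fun ij : Fin n × Fin n =>
        (((((t⁻¹ : T) : Matrix (Fin n) (Fin n) ℝ)) ij.1 ij.2 : ℝ) : ℂ)) :=
      continuous_pi fun ij => Complex.continuous_ofReal.comp
        ((continuous_apply ij.2).comp ((continuous_apply ij.1).comp h1))
    exact (MvPolynomial.continuous_eval (p := coeff m Q)).comp h2
  have hFint : ∀ m, Integrable (F m) μ := fun m =>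
    (hFcont m).integrable_of_hasCompactSupport ((isClosed_tsupport _).isCompact)
  have heval : ∀ v : Fin n → ℂ,
      eval v (∑ m ∈ Q.support, monomial m (∫ t, F m t ∂μ))
        = ∫ t, eval (Matrix.mulVec (cMat ((t⁻¹ : T) : Matrix (Fin n) (Fin n) ℝ)) v) h ∂μ := by
    intro v
    rw [map_sum]
    have e1 : ∀ m ∈ Q.support, eval v (monomial m (∫ t, F m t ∂μ))
        = ∫ t, F m t * ∏ i ∈ m.support, v i ^ m i ∂μ := by
      intro m _
      rw [eval_monomial, integral_mul_const]
      rfl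
    rw [Finset.sum_congr rfl e1, ← integral_finset_sum]
    · apply integral_congr_ae
      filter_upwards with t
      rw [← key ((t⁻¹ : T) : Matrix (Fin n) (Fin n) ℝ) v, eval₂_eq]
    · intro m _
      exact (hFint m).mul_const _
  refine ⟨∑ m ∈ Q.support, monomial m (∫ t, F m t ∂μ), ?_, ?_, ?_⟩
  · -- K-invariance
    intro k hk v
    rw [heval, heval]
    set t₀ : T := ⟨k, hk⟩ with ht₀
    have hsub : ∀ t : T,
        eval (Matrix.mulVec (cMat ((t⁻¹ : T) : Matrix (Fin n) (Fin n) ℝ))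
          (Matrix.mulVec (cMat k) v)) h
        = eval (Matrix.mulVec (cMat ((((t₀⁻¹ * t)⁻¹ : T)) : Matrix (Fin n) (Fin n) ℝ)) v) h := by
      intro t
      rw [Matrix.mulVec_mulVec, ← cMat_mul]
      congr 2
      have : ((t₀⁻¹ * t)⁻¹ : T) = t⁻¹ * t₀ := by
        rw [mul_inv_rev, inv_inv]
      rw [this]
      rfl
    calc ∫ t, eval (Matrix.mulVec (cMat ((t⁻¹ : T) : Matrix (Fin n) (Fin n) ℝ))
            (Matrix.mulVec (cMat k) v)) h ∂μ
        = ∫ t, eval (Matrix.mulVec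
            (cMat ((((t₀⁻¹ * t)⁻¹ : T)) : Matrix (Fin n) (Fin n) ℝ)) v) h ∂μ := by
          apply integral_congr_ae
          filter_upwards with t
          exact hsub t
      _ = ∫ t, eval (Matrix.mulVec (cMat ((t⁻¹ : T) : Matrix (Fin n) (Fin n) ℝ)) v) h ∂μ :=
          integral_mul_left_eq_self
            (fun t : T => eval (Matrix.mulVec
              (cMat (((t⁻¹ : T)) : Matrix (Fin n) (Fin n) ℝ)) v) h) t₀⁻¹
  · -- vanishing
    intro v hv
    rw [heval]
    have : ∀ t : T, eval (Matrix.mulVec (cMat ((t⁻¹ : T) : Matrix (Fin n) (Fin n) ℝ)) v) h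
        = 0 := fun t => hv _ (t⁻¹).2
    simp only [this, integral_zero]
  · -- value one
    intro v hv
    rw [heval]
    have : ∀ t : T, eval (Matrix.mulVec (cMat ((t⁻¹ : T) : Matrix (Fin n) (Fin n) ℝ)) v) h
        = 1 := fun t => hv _ (t⁻¹).2
    simp only [this]
    rw [integral_const, probReal_univ]
    simp

lemma mem_vanishingIdeal_iff {𝕜 : Type} [RCLike 𝕜] {V : Set (Fin n → 𝕜)}
    {p : MvPolynomial (Fin n) 𝕜} :
    p ∈ ZPaper.vanishingIdeal 𝕜 n V ↔ ∀ x ∈ V, eval x p = 0 := Iff.rfl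

lemma mem_zeroSet_iff {𝕜 : Type} [RCLike 𝕜] {S : Set (MvPolynomial (Fin n) 𝕜)}
    {v : Fin n → 𝕜} : v ∈ zeroSet 𝕜 n S ↔ ∀ p ∈ S, eval v p = 0 := Iff.rfl

end Aux

/-- **Theorem 1.3(1).** Let `K` be a compact Lie group (realized as a compact subgroup of
`GL_n(ℝ)`) and `X ⊆ W = ℝⁿ` a `K`-stable real algebraic set.  Then `X` is almost
`K`-reduced if and only if its complexification `Y = X_ℂ ⊆ ℂⁿ` is `G`-saturated, where
`G = K_ℂ` is the complexification of `K`. -/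
theorem almost_K_reduced_iff_saturated
    (n : ℕ) (K : Set (Matrix (Fin n) (Fin n) ℝ))
    (hKgrp : IsMatSubgroup ℝ n K) (hKcpt : IsCompact K)
    (X : Set (Fin n → ℝ)) (hXalg : IsAlgebraicSet ℝ n X) (hXstab : Stabilizes ℝ n K X) :
    IsAlmostGReduced ℝ n K X ↔
      IsSaturated ℂ n (complexifiedGroup n K) (complexification n X) := by
  classical
  have hmapvan : ∀ {f : MvPolynomial (Fin n) ℝ}, (∀ x ∈ X, eval x f = 0) →
      map (algebraMap ℝ ℂ) f ∈ ZPaper.vanishingIdeal ℂ n (cVec n '' X) := by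
    intro f hf
    rw [mem_vanishingIdeal_iff]
    rintro w ⟨x, hx, rfl⟩
    show eval ((cVec n) x) (map (algebraMap ℝ ℂ) f) = 0
    rw [eval_cV_map, hf x hx, Complex.ofReal_zero]
  constructor
  · -- almost reduced → saturated
    intro hred
    apply Set.Subset.antisymm
    · intro z hz
      exact ⟨z, hz, fun p _ => rfl⟩
    · rintro z ⟨y, hy, hagree⟩
      rw [complexification, zclosure, mem_zeroSet_iff]
      intro q hq
      rw [SetLike.mem_coe, mem_vanishingIdeal_iff] at hq
      have key : ∀ f : MvPolynomial (Fin n) ℝ, (∀ x ∈ X, eval x f = 0) →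
          eval z (map (algebraMap ℝ ℂ) f) = 0 := by
        intro f hf
        have hfI : f ∈ ZPaper.vanishingIdeal ℝ n X := hf
        rw [← hred] at hfI
        obtain ⟨m, hm⟩ := Ideal.mem_radical_iff.mp hfI
        have hmap : map (algebraMap ℝ ℂ) (f ^ m) ∈
            Ideal.span ((map (algebraMap ℝ ℂ)) ''
              {p | Invariant ℝ n K p ∧ ∀ x ∈ X, eval x p = 0}) := by
          rw [← Ideal.map_span (MvPolynomial.map (algebraMap ℝ ℂ))]
          exact Ideal.mem_map_of_mem _ hm
        have hker : Ideal.span ((map (algebraMap ℝ ℂ)) ''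
            {p | Invariant ℝ n K p ∧ ∀ x ∈ X, eval x p = 0})
            ≤ RingHom.ker (eval z : MvPolynomial (Fin n) ℂ →+* ℂ) := by
          apply Ideal.span_le.mpr
          rintro w' ⟨f₀, hf₀, rfl⟩
          have hinv := map_invariant_complexified n (K := K) hf₀.1
          show eval z (map (algebraMap ℝ ℂ) f₀) = 0
          rw [hagree _ hinv]
          exact hy _ (hmapvan hf₀.2)
        have hpow : eval z (map (algebraMap ℝ ℂ) f) ^ m = 0 := by
          have := hker hmap
          rw [RingHom.mem_ker] at this
          rwa [map_pow, map_pow] at this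
        rcases Nat.eq_zero_or_pos m with h0 | hpos
        · subst h0
          rw [pow_zero] at hpow
          exact absurd hpow one_ne_zero
        · exact pow_eq_zero_iff hpos.ne' |>.mp hpow
      have hre : ∀ x ∈ X, eval x (reP q) = 0 := by
        intro x hx
        have h0 : eval (cVec n x) q = 0 := hq _ ⟨x, hx, rfl⟩
        rw [eval_reP, h0]
        simp
      have him : ∀ x ∈ X, eval x (imP q) = 0 := by
        intro x hx
        have h0 : eval (cVec n x) q = 0 := hq _ ⟨x, hx, rfl⟩
        rw [eval_imP, h0]
        simp
      conv_lhs => rw [reP_imP_decomp q]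
      rw [map_add, map_mul, eval_C, key _ hre, key _ him, mul_zero, add_zero]
  · -- saturated → almost reduced
    intro hsat
    apply le_antisymm
    · intro p hp
      obtain ⟨m, hm⟩ := Ideal.mem_radical_iff.mp hp
      have hJI : invariantIdeal ℝ n K X ≤ ZPaper.vanishingIdeal ℝ n X := by
        apply Ideal.span_le.mpr
        rintro f hf
        exact SetLike.mem_coe.mpr hf.2
      have hpm := hJI hm
      rw [mem_vanishingIdeal_iff] at hpm ⊢
      intro x hx
      rcases Nat.eq_zero_or_pos m with h0 | hpos
      · subst h0
        have := hpm x hx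
        rw [pow_zero, map_one] at this
        exact absurd this one_ne_zero
      · have := hpm x hx
        rw [map_pow] at this
        exact pow_eq_zero_iff hpos.ne' |>.mp this
    · intro p hp
      rw [mem_vanishingIdeal_iff] at hp
      have hzY : ∀ z ∈ MvPolynomial.zeroLocus ℂ (Ideal.span ((map (algebraMap ℝ ℂ)) ''
          {p | Invariant ℝ n K p ∧ ∀ x ∈ X, eval x p = 0})), z ∈ complexification n X := by
        intro z hz
        rw [MvPolynomial.mem_zeroLocus_iff] at hz
        by_cases hne : (MvPolynomial.zeroLocus ℂ
            (ZPaper.vanishingIdeal ℂ n (cVec n '' X) ⊔ Ideal.span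
              {f | ∃ q, Invariant ℂ n (complexifiedGroup n K) q ∧
                f = q - C (eval z q)})).Nonempty
        · obtain ⟨y, hy⟩ := hne
          rw [MvPolynomial.mem_zeroLocus_iff] at hy
          rw [hsat]
          refine ⟨y, ?_, ?_⟩
          · rw [complexification, zclosure, mem_zeroSet_iff]
            intro q hq
            exact hy q (Ideal.mem_sup_left (SetLike.mem_coe.mp hq))
          · intro q hq
            have h0 : eval y (q - C (eval z q)) = 0 :=
              hy _ (Ideal.mem_sup_right (Ideal.subset_span ⟨q, hq, rfl⟩))
            rw [map_sub, eval_C, sub_eq_zero] at h0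
            exact h0.symm
        · exfalso
          rw [Set.not_nonempty_iff_eq_empty] at hne
          have hrad : (ZPaper.vanishingIdeal ℂ n (cVec n '' X) ⊔ Ideal.span
              {f | ∃ q, Invariant ℂ n (complexifiedGroup n K) q ∧
                f = q - C (eval z q)}).radical = ⊤ := by
            rw [← MvPolynomial.vanishingIdeal_zeroLocus_eq_radical (K := ℂ), hne]
            apply eq_top_iff.mpr
            intro q _
            exact fun x hx => absurd hx (Set.notMem_empty x)
          have h1a : (1 : MvPolynomial (Fin n) ℂ) ∈
              ZPaper.vanishingIdeal ℂ n (cVec n '' X) ⊔ Ideal.span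
                {f | ∃ q, Invariant ℂ n (complexifiedGroup n K) q ∧
                  f = q - C (eval z q)} := by
            rw [Ideal.radical_eq_top.mp hrad]
            exact Submodule.mem_top
          obtain ⟨h, hhmem, s, hsmem, hhs⟩ := Submodule.mem_sup.mp h1a
          obtain ⟨c, hcsupp, hcsum⟩ := Submodule.mem_span_set.mp hsmem
          have hk1 : ∀ k ∈ K, eval (Matrix.mulVec (cMat k) z) h = 1 := by
            intro k hk
            have hw := congrArg (eval (Matrix.mulVec (cMat k) z)) hhs
            rw [map_add, map_one] at hw
            have hs0 : eval (Matrix.mulVec (cMat k) z) s = 0 := by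
              rw [← hcsum]
              simp only [Finsupp.sum]
              rw [map_sum]
              apply Finset.sum_eq_zero
              intro f hf
              obtain ⟨q, hqinv, hfq⟩ := hcsupp hf
              have hq0 : eval (Matrix.mulVec (cMat k) z) f = 0 := by
                rw [hfq, map_sub, eval_C,
                  hqinv (cMat k) (cMat_mem_complexifiedGroup n hk) z, sub_self]
              rw [smul_eq_mul, map_mul, hq0, mul_zero]
            rw [hs0, add_zero] at hw
            exact hw
          obtain ⟨R, hRinv, hR0, hR1⟩ := reynolds n hKgrp hKcpt h
          have hz1 : eval z R = 1 := hR1 z hk1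
          have hreinv := reP_invariant n (K := K) (q := R) hRinv
          have hvan : ∀ x ∈ X, eval ((cVec n) x) R = 0 := by
            intro x hx
            apply hR0
            intro k hk
            rw [cMat_mulVec]
            exact hhmem _ ⟨_, hXstab k hk x hx, rfl⟩
          have hre_mem : reP R ∈ {p : MvPolynomial (Fin n) ℝ |
              Invariant ℝ n K p ∧ ∀ x ∈ X, eval x p = 0} :=
            ⟨hreinv.1, fun x hx => by rw [eval_reP, hvan x hx]; simp⟩
          have him_mem : imP R ∈ {p : MvPolynomial (Fin n) ℝ |
              Invariant ℝ n K p ∧ ∀ x ∈ X, eval x p = 0} :=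
            ⟨hreinv.2, fun x hx => by rw [eval_imP, hvan x hx]; simp⟩
          have e1 : eval z (map (algebraMap ℝ ℂ) (reP R)) = 0 :=
            hz _ (Ideal.subset_span ⟨_, hre_mem, rfl⟩)
          have e2 : eval z (map (algebraMap ℝ ℂ) (imP R)) = 0 :=
            hz _ (Ideal.subset_span ⟨_, him_mem, rfl⟩)
          have hz0 : eval z R = 0 := by
            conv_lhs => rw [reP_imP_decomp R]
            rw [map_add, map_mul, eval_C, e1, e2, mul_zero, add_zero]
          rw [hz1] at hz0
          exact one_ne_zero hz0
      have hmp : map (algebraMap ℝ ℂ) p ∈ (Ideal.span ((map (algebraMap ℝ ℂ)) ''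
          {p | Invariant ℝ n K p ∧ ∀ x ∈ X, eval x p = 0})).radical := by
        rw [← MvPolynomial.vanishingIdeal_zeroLocus_eq_radical (K := ℂ)]
        intro z hzL
        have hzY' := hzY z hzL
        rw [complexification, zclosure, mem_zeroSet_iff] at hzY'
        exact hzY' _ (SetLike.mem_coe.mpr (hmapvan hp))
      obtain ⟨m, hm⟩ := Ideal.mem_radical_iff.mp hmp
      refine Ideal.mem_radical_iff.mpr ⟨m, ?_⟩
      apply mem_span_of_map_mem
      rwa [map_pow]


end ZPaper
end
end

section
/- Let V be a cofree G-module and U ⊆ V//G a locally closed subset. If the scheme-theoretic inverse image π^{-1}(U) is reduced, then the scheme-theoretic inverse image π^{-1}(closure of U) is also reduced. -/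
/-!
Common framework: a "compact Lie group / complex reductive group acting on a
finite-dimensional module" is modelled as a subgroup of invertible `n × n`
matrices over `𝕜 = ℝ` or `ℂ` acting on `Fin n → 𝕜` by `Matrix.mulVec`.
Polynomial functions on the module are `MvPolynomial (Fin n) 𝕜`.
-/

set_option synthInstance.maxHeartbeats 1000000
set_option maxHeartbeats 1000000

noncomputable section

open MvPolynomial

namespace ZPaper

variable (𝕜 : Type) [RCLike 𝕜] (n : ℕ)

/-- **Lemma 3.4(2).** Let `G` be a complex reductive group and `V = ℂⁿ` a cofree `G`-module.
Let `U ⊆ V//G` be locally closed, encoded by its inverse image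
`π⁻¹(U) = zeroSet C \ zeroSet D` for families `C`, `D` of invariants.  Let
`J = I(closure U)·ℂ[V]` be the ideal generated by the invariants vanishing on `π⁻¹(U)`, so
that the scheme-theoretic `π⁻¹(closure U)` has coordinate ring `ℂ[V]/J` and the
scheme-theoretic `π⁻¹(U)` is covered by the affine opens with coordinate rings `(ℂ[V]/J)_f`,
`f ∈ D`.  If `π⁻¹(U)` is reduced then so is `π⁻¹(closure U)`. -/
theorem reduced_preimage_closure_of_reduced_preimage
    (n : ℕ) (G : Set (Matrix (Fin n) (Fin n) ℂ)) (hG : IsReductiveGroup ℂ n G)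
    (hcofree : IsCofree ℂ n G)
    (C D : Set (MvPolynomial (Fin n) ℂ))
    (hC : ∀ p ∈ C, Invariant ℂ n G p) (hD : ∀ p ∈ D, Invariant ℂ n G p)
    (J : Ideal (MvPolynomial (Fin n) ℂ))
    (hJ : J = Ideal.span {p | Invariant ℂ n G p ∧
      ∀ u ∈ zeroSet ℂ n C \ zeroSet ℂ n D, eval u p = 0})
    (hred : ∀ f ∈ D, IsReduced (Localization.Away (Ideal.Quotient.mk J f))) :
    IsReduced (MvPolynomial (Fin n) ℂ ⧸ J) := by
  classical
  set S : Set (Fin n → ℂ) := zeroSet ℂ n C \ zeroSet ℂ n D with hS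
  set R := invariantSubalgebra ℂ n G with hR
  haveI : Module.Free ↥R (MvPolynomial (Fin n) ℂ) := hcofree
  let b := Module.Free.chooseBasis ↥R (MvPolynomial (Fin n) ℂ)
  -- membership in J is coordinatewise vanishing on S
  have hJmem : ∀ x : MvPolynomial (Fin n) ℂ, x ∈ J ↔
      ∀ i, ∀ u ∈ S, eval u ((b.repr x i : ↥R) : MvPolynomial (Fin n) ℂ) = 0 := by
    intro x
    constructor
    · intro hx
      rw [hJ] at hx
      obtain ⟨c, hsupp, hsum⟩ := Submodule.mem_span_set.mp hx
      intro i u hu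
      have hx' : x = c.sum fun p a => a * p := by
        rw [← hsum]; rfl
      have hrep : b.repr x = c.sum fun p a => b.repr (a * p) := by
        rw [hx', Finsupp.sum, map_sum]; rfl
      rw [hrep, Finsupp.sum_apply, Finsupp.sum]
      rw [AddSubmonoidClass.coe_finset_sum, map_sum]
      refine Finset.sum_eq_zero fun p hp => ?_
      have hpT := hsupp hp
      have hq : p ∈ R := hpT.1
      have hmul : c p * p = (⟨p, hq⟩ : ↥R) • (c p) := by
        rw [Algebra.smul_def]; rw [mul_comm]; rfl
      rw [hmul, map_smul, Finsupp.smul_apply, smul_eq_mul]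
      push_cast
      rw [map_mul]
      have : eval u p = 0 := hpT.2 u hu
      rw [this]; ring
    · intro h
      have hx : x = (b.repr x).sum fun i c => c • b i := (b.linearCombination_repr x).symm
      rw [hx]
      refine Ideal.sum_mem _ fun i hi => ?_
      show (b.repr x i) • b i ∈ J
      have hc : ((b.repr x i : ↥R) : MvPolynomial (Fin n) ℂ) ∈ J := by
        rw [hJ]
        exact Ideal.subset_span ⟨(b.repr x i).2, fun u hu => h i u hu⟩
      have : (b.repr x i) • b i = ((b.repr x i : ↥R) : MvPolynomial (Fin n) ℂ) * b i := by
        rw [Algebra.smul_def]; rfl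
      rw [this]
      exact Ideal.mul_mem_right _ _ hc
  constructor
  intro a ha
  obtain ⟨x, rfl⟩ := Ideal.Quotient.mk_surjective a
  have key : ∀ f ∈ D, ∃ k : ℕ, f ^ k * x ∈ J := by
    intro f hf
    haveI := hred f hf
    have h1 : IsNilpotent (algebraMap (MvPolynomial (Fin n) ℂ ⧸ J)
        (Localization.Away (Ideal.Quotient.mk J f)) (Ideal.Quotient.mk J x)) :=
      ha.map (algebraMap (MvPolynomial (Fin n) ℂ ⧸ J) (Localization.Away (Ideal.Quotient.mk J f)))
    have h2 := h1.eq_zero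
    have h3 := (IsLocalization.map_eq_zero_iff (Submonoid.powers (Ideal.Quotient.mk J f))
      (Localization.Away (Ideal.Quotient.mk J f)) (Ideal.Quotient.mk J x)).mp h2
    obtain ⟨⟨m, k, rfl⟩, hm⟩ := h3
    refine ⟨k, ?_⟩
    rw [← Ideal.Quotient.eq_zero_iff_mem, map_mul, map_pow]
    exact hm
  show Ideal.Quotient.mk J x = 0
  rw [Ideal.Quotient.eq_zero_iff_mem, hJmem]
  intro i u hu
  have huD : u ∉ zeroSet ℂ n D := hu.2
  obtain ⟨f, hfD, hfu⟩ : ∃ f ∈ D, eval u f ≠ 0 := by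
    by_contra h
    push_neg at h
    exact huD h
  obtain ⟨k, hk⟩ := key f hfD
  have hfk : (f : MvPolynomial (Fin n) ℂ) ^ k ∈ R := pow_mem (hD f hfD) k
  have hmul : f ^ k * x = (⟨f ^ k, hfk⟩ : ↥R) • x := by
    rw [Algebra.smul_def]; rfl
  have h3 := (hJmem _).mp hk i u hu
  rw [hmul, map_smul, Finsupp.smul_apply, smul_eq_mul] at h3
  push_cast at h3
  rw [map_mul, map_pow] at h3
  rcases mul_eq_zero.mp h3 with h | h
  · exact absurd h (pow_ne_zero k hfu)
  · exact h

end ZPaper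
end
end
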